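/- Let n ≥ 1, let T ≥ 0, and let X be a real symmetric n×n matrix satisfying the linear relaxation constraints (X_{ii} ≥ 0 for all i, and X_{ii} + X_{jj} + 2X_{ij} ≥ 0 and X_{ii} + X_{jj} − 2X_{ij} ≥ 0 for all i, j) and tr(X) = T. Then the smallest eigenvalue of X satisfies λ_min(X) ≥ T/n − n·T. -/
import Mathlib


/-- For a real symmetric `n × n` matrix `X` satisfying the linear
relaxation constraints with `tr X = T`, every eigenvalue of `X` (in particular the
smallest) is at least `T / n - n * T`. -/
theorem stmt_3 (n : ℕ) (hn : 1 ≤ n) (T : ℝ) (hT : 0 ≤ T)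
    (X : Matrix (Fin n) (Fin n) ℝ) (hX : X.IsHermitian)
    (hdiag : ∀ i, 0 ≤ X i i)
    (hplus : ∀ i j, 0 ≤ X i i + X j j + 2 * X i j)
    (hminus : ∀ i j, 0 ≤ X i i + X j j - 2 * X i j)
    (htr : X.trace = T) :
    ∀ i, T / n - (n : ℝ) * T ≤ hX.eigenvalues i := by
  intro i
  set μ := hX.eigenvalues i with hμdef
  have hv : Module.End.HasEigenvalue (Matrix.toLin' X) μ := by
    apply Module.End.hasEigenvalue_of_hasEigenvector (x := ⇑(hX.eigenvectorBasis i))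
    constructor
    · rw [Module.End.mem_eigenspace_iff]
      have := hX.mulVec_eigenvectorBasis i
      funext j
      have h2 := congrFun this j
      simpa [Matrix.toLin'_apply] using h2
    · intro h
      exact hX.eigenvectorBasis.toBasis.ne_zero i (by
        simp only [OrthonormalBasis.coe_toBasis]
        ext j
        exact congrFun h j)
  obtain ⟨k, hk⟩ := eigenvalue_mem_ball hv
  rw [Metric.mem_closedBall, Real.dist_eq] at hk
  set N : ℝ := (n : ℝ) with hNdef
  have hN : 1 ≤ N := by rw [hNdef]; exact_mod_cast hn
  have htr' : ∑ j, X j j = T := htr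
  have hdle : ∀ j : Fin n, X j j ≤ T := by
    intro j
    have h1 : ∑ l ∈ Finset.univ.erase j, X l l = T - X j j := by
      rw [Finset.sum_erase_eq_sub (Finset.mem_univ j), htr']
    have h2 : (0:ℝ) ≤ ∑ l ∈ Finset.univ.erase j, X l l :=
      Finset.sum_nonneg fun l _ => hdiag l
    linarith
  have hsum : ∑ j ∈ Finset.univ.erase k, X j j = T - X k k := by
    rw [Finset.sum_erase_eq_sub (Finset.mem_univ k), htr']
  have habs : ∀ j, ‖X k j‖ ≤ (X k k + X j j) / 2 := by
    intro j
    rw [Real.norm_eq_abs, abs_le]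
    constructor
    · have := hplus k j; linarith
    · have := hminus k j; linarith
  have hcard : ((Finset.univ.erase k).card : ℝ) = N - 1 := by
    rw [Finset.card_erase_of_mem (Finset.mem_univ k)]
    simp [hNdef]
    rw [Nat.cast_sub hn]
    simp
  have hR : ∑ j ∈ Finset.univ.erase k, ‖X k j‖ ≤ ((N - 1) * X k k + (T - X k k)) / 2 := by
    calc ∑ j ∈ Finset.univ.erase k, ‖X k j‖
        ≤ ∑ j ∈ Finset.univ.erase k, (X k k + X j j) / 2 :=
          Finset.sum_le_sum fun j _ => habs j
      _ = ((N - 1) * X k k + (T - X k k)) / 2 := by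
          rw [← hsum, ← Finset.sum_div, Finset.sum_add_distrib, Finset.sum_const,
            nsmul_eq_mul, hcard]
  have hmu : X k k - ((N - 1) * X k k + (T - X k k)) / 2 ≤ μ := by
    have := abs_le.mp hk
    linarith
  have hsle : T - X k k ≤ (N - 1) * T := by
    rw [← hsum]
    calc ∑ j ∈ Finset.univ.erase k, X j j ≤ ∑ _j ∈ Finset.univ.erase k, T :=
          Finset.sum_le_sum fun j _ => hdle j
      _ = (N - 1) * T := by rw [Finset.sum_const, nsmul_eq_mul, hcard]
  have key : (1 - N) * T ≤ μ := by
    have hd0 := hdiag k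
    have hdT := hdle k
    nlinarith [mul_nonneg (sub_nonneg.mpr hN) hT, mul_nonneg (sub_nonneg.mpr hN) (hdiag k)]
  have hdiv : T / N ≤ T := div_le_self hT hN
  linarith
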